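/- Let ρ, β, k, μ, γ be real numbers with μ ≠ 0, let ħw > 0, and set p^(nν) = e^((k+μ)n) and q^(nα) = e^((k−μ)n) (parametrization p = e^τ, q = e^ρ, τν = k + μ, ρα = k − μ). Define f(n) = e^(ρβ) · ( (e^((k+μ)n) − e^((k−μ)n))/(e^(k+μ) − e^(k−μ)) + 2γ · (e^((k+μ)n) − (−1)^n · e^((k−μ)n))/(e^(k+μ) + e^(k−μ)) ) and e(n) = (ħw/2)·(f(n) + f(n+1)). Then for every n ∈ ℕ, e(2n+1) − e(2n) = (ħw/2) · e^(ρβ) · e^((2n−1)k) · ( 1/sinh(μ) + 2γ/cosh(μ) ) · ( e^(2k)·sinh(2(n+1)μ) − sinh(2nμ) ). -/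

import Mathlib

set_option maxHeartbeats 1000000

open Real

theorem stmt_17 (ρ β k μ γ hbarw : ℝ) (hμ : μ ≠ 0) (hw : 0 < hbarw)
    (f : ℕ → ℝ)
    (hf : ∀ n : ℕ, f n = Real.exp (ρ * β) *
      ((Real.exp ((k + μ) * n) - Real.exp ((k - μ) * n))
          / (Real.exp (k + μ) - Real.exp (k - μ))
        + 2 * γ * (Real.exp ((k + μ) * n) - (-1 : ℝ) ^ n * Real.exp ((k - μ) * n))
            / (Real.exp (k + μ) + Real.exp (k - μ))))
    (E : ℕ → ℝ) (hE : ∀ n : ℕ, E n = hbarw / 2 * (f n + f (n + 1))) :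
    ∀ n : ℕ, E (2 * n + 1) - E (2 * n) =
      hbarw / 2 * Real.exp (ρ * β) * Real.exp ((2 * (n : ℝ) - 1) * k)
        * (1 / Real.sinh μ + 2 * γ / Real.cosh μ)
        * (Real.exp (2 * k) * Real.sinh (2 * ((n : ℝ) + 1) * μ)
            - Real.sinh (2 * (n : ℝ) * μ)) := by
  intro n
  have hXne : Real.exp k ≠ 0 := Real.exp_ne_zero k
  have hYne : Real.exp μ ≠ 0 := Real.exp_ne_zero μ
  have hsinh : Real.sinh μ ≠ 0 := Real.sinh_ne_zero.mpr hμ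
  have hcosh : Real.cosh μ ≠ 0 := (Real.cosh_pos μ).ne'
  have hexp_pow : ∀ (x : ℝ) (m : ℕ), Real.exp (x * m) = Real.exp x ^ m := by
    intro x m; rw [mul_comm, Real.exp_nat_mul]
  have hm1a : ((-1 : ℝ)) ^ (2 * n) = 1 := by rw [pow_mul]; norm_num
  have hm1b : ((-1 : ℝ)) ^ (2 * n + 1) = -1 := by rw [pow_succ, hm1a]; ring
  have hm1c : ((-1 : ℝ)) ^ (2 * n + 1 + 1) = 1 := by rw [pow_succ, hm1b]; ring
  have hAB : Real.exp (k + μ) - Real.exp (k - μ) = 2 * Real.exp k * Real.sinh μ := by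
    rw [Real.sinh_eq, Real.exp_add, Real.exp_sub, Real.exp_neg]
    field_simp
  have hAB2 : Real.exp (k + μ) + Real.exp (k - μ) = 2 * Real.exp k * Real.cosh μ := by
    rw [Real.cosh_eq, Real.exp_add, Real.exp_sub, Real.exp_neg]
    field_simp
  have key : Real.exp ((k + μ) * ((2 * n + 1 + 1 : ℕ) : ℝ))
        - Real.exp ((k - μ) * ((2 * n + 1 + 1 : ℕ) : ℝ))
        - (Real.exp ((k + μ) * ((2 * n : ℕ) : ℝ)) - Real.exp ((k - μ) * ((2 * n : ℕ) : ℝ)))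
      = 2 * Real.exp k * (Real.exp ((2 * (n : ℝ) - 1) * k)
          * (Real.exp (2 * k) * Real.sinh (2 * ((n : ℝ) + 1) * μ)
              - Real.sinh (2 * (n : ℝ) * μ))) := by
    have e1 : (2 * (n : ℝ) - 1) * k = (n : ℝ) * (2 * k) + (-k) := by ring
    have e2 : 2 * ((n : ℝ) + 1) * μ = (n : ℝ) * (2 * μ) + 2 * μ := by ring
    have e3 : 2 * (n : ℝ) * μ = (n : ℝ) * (2 * μ) := by ring
    simp only [hexp_pow, e1, e2, e3, Real.sinh_eq, Real.exp_add, Real.exp_neg,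
      Real.exp_sub, Real.exp_nat_mul, show (2 : ℝ) * k = k + k from by ring,
      show (2 : ℝ) * μ = μ + μ from by ring]
    field_simp
    simp only [div_pow, mul_pow]
    field_simp
    ring
  have h1 : E (2 * n + 1) - E (2 * n) = hbarw / 2 * Real.exp (ρ * β) *
      ((Real.exp ((k + μ) * ((2 * n + 1 + 1 : ℕ) : ℝ))
          - Real.exp ((k - μ) * ((2 * n + 1 + 1 : ℕ) : ℝ))
          - (Real.exp ((k + μ) * ((2 * n : ℕ) : ℝ)) - Real.exp ((k - μ) * ((2 * n : ℕ) : ℝ))))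
        * (1 / (2 * Real.exp k * Real.sinh μ) + 2 * γ / (2 * Real.exp k * Real.cosh μ))) := by
    rw [hE, hE, hf (2 * n), hf (2 * n + 1), hf (2 * n + 1 + 1), hm1a, hm1b, hm1c, hAB, hAB2]
    field_simp
    ring
  rw [h1, key]
  field_simp
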